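/- Let n ≥ 1 be an integer, let β > −1 be real, and let α_1, ..., α_n be real numbers with α_l > −1 for all l. Then ∫_{1 > λ_1 > λ_2 > ... > λ_n > 0} (∏_{k=1}^n (1 − λ_k)^β) · (∏_{1≤j<k≤n} (λ_j − λ_k)) · det[λ_j^{α_k}]_{j,k=1,...,n} dλ_1⋯dλ_n = (∏_{1≤j<k≤n} (α_j − α_k)) · ∏_{l=1}^n Γ(α_l + 1) Γ(β + n − l + 1)/Γ(α_l + β + n + 1). -/

import Mathlib

open MeasureTheory Set Matrix


lemma complexify (a b : ℝ) : Set.EqOn (fun x : ℝ => (x:ℂ) ^ ((a:ℂ)+1-1) * (1 - (x:ℂ)) ^ ((b:ℂ)+1-1))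
    (fun x : ℝ => ((x ^ a * (1-x) ^ b : ℝ) : ℂ)) (Set.uIcc 0 1) := by
  intro x hx
  rw [Set.uIcc_of_le (by norm_num)] at hx
  simp only [add_sub_cancel_right]
  rw [show (1 - (x:ℂ)) = ((1-x:ℝ):ℂ) by push_cast; ring, ← Complex.ofReal_cpow hx.1, ← Complex.ofReal_cpow (by linarith [hx.2] : (0:ℝ) ≤ 1 - x)]
  push_cast
  ring

lemma betaIntegrable {a b : ℝ} (ha : -1 < a) (hb : -1 < b) :
    IntegrableOn (fun t : ℝ => t ^ a * (1-t) ^ b) (Set.Ioo 0 1) := by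
  have h := Complex.betaIntegral_convergent (u := (a:ℂ)+1) (v := (b:ℂ)+1)
    (by simp; linarith) (by simp; linarith)
  rw [intervalIntegrable_iff_integrableOn_Ioo_of_le (by norm_num)] at h
  have h2 : IntegrableOn (fun x : ℝ => ((x ^ a * (1-x) ^ b : ℝ) : ℂ)) (Set.Ioo 0 1) := by
    refine IntegrableOn.congr_fun h ?_ measurableSet_Ioo
    intro x hx
    exact complexify a b (by simp [Set.uIcc_of_le]; constructor <;> [exact hx.1.le; exact hx.2.le])
  have h3 := h2.re
  refine IntegrableOn.congr_fun h3 ?_ measurableSet_Ioo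
  intro x _
  simp

lemma betaValue {a b : ℝ} (ha : -1 < a) (hb : -1 < b) :
    ∫ t in Set.Ioo (0:ℝ) 1, t ^ a * (1-t) ^ b
      = Real.Gamma (a+1) * Real.Gamma (b+1) / Real.Gamma (a+b+2) := by
  have h := Complex.Gamma_mul_Gamma_eq_betaIntegral (s := (a:ℂ)+1) (t := (b:ℂ)+1)
    (by simp; linarith) (by simp; linarith)
  have hbeta : Complex.betaIntegral ((a:ℂ)+1) ((b:ℂ)+1)
      = ((∫ t in Set.Ioo (0:ℝ) 1, t ^ a * (1-t) ^ b : ℝ) : ℂ) := by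
    rw [Complex.betaIntegral, intervalIntegral.integral_congr (complexify a b),
      intervalIntegral.integral_ofReal, intervalIntegral.integral_of_le (by norm_num),
      integral_Ioc_eq_integral_Ioo]
  rw [hbeta] at h
  have h2 : ((a:ℂ)+1) + ((b:ℂ)+1) = ((a+b+2 : ℝ) : ℂ) := by push_cast; ring
  rw [h2] at h
  rw [show ((a:ℂ)+1) = ((a+1:ℝ):ℂ) by push_cast; ring, show ((b:ℂ)+1) = ((b+1:ℝ):ℂ) by push_cast; ring,
    Complex.Gamma_ofReal, Complex.Gamma_ofReal, Complex.Gamma_ofReal] at h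
  have h3 : Real.Gamma (a+1) * Real.Gamma (b+1)
      = Real.Gamma (a+b+2) * ∫ t in Set.Ioo (0:ℝ) 1, t ^ a * (1-t) ^ b := by
    exact_mod_cast h
  have hpos : 0 < Real.Gamma (a+b+2) := Real.Gamma_pos_of_pos (by linarith)
  rw [h3]
  field_simp


variable {n : ℕ}

lemma cube_meas : MeasurableSet (Set.univ.pi fun _ : Fin n => Ioo (0:ℝ) 1) :=
  MeasurableSet.univ_pi fun _ => measurableSet_Ioo

lemma cube_indicator_prod (g : Fin n → ℝ → ℝ) :
    (Set.univ.pi fun _ : Fin n => Ioo (0:ℝ) 1).indicator (fun lam => ∏ i, g i (lam i))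
      = fun lam => ∏ i, (Ioo (0:ℝ) 1).indicator (g i) (lam i) := by
  funext lam
  by_cases h : lam ∈ Set.univ.pi fun _ : Fin n => Ioo (0:ℝ) 1
  · rw [Set.indicator_of_mem h]
    exact Finset.prod_congr rfl fun i _ => (Set.indicator_of_mem (h i trivial) _).symm
  · rw [Set.indicator_of_notMem h]
    rw [Set.mem_pi] at h; push_neg at h
    obtain ⟨i, -, hi⟩ := h
    exact (Finset.prod_eq_zero (Finset.mem_univ i) (Set.indicator_of_notMem hi _)).symm

lemma cube_prod_integrable (g : Fin n → ℝ → ℝ) (hg : ∀ i, IntegrableOn (g i) (Ioo 0 1)) :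
    IntegrableOn (fun lam : Fin n → ℝ => ∏ i, g i (lam i))
      (Set.univ.pi fun _ : Fin n => Ioo (0:ℝ) 1) := by
  have h := Integrable.fintype_prod (E := ℝ)
    fun i => (integrable_indicator_iff measurableSet_Ioo).2 (hg i)
  rw [← cube_indicator_prod] at h
  exact (integrable_indicator_iff cube_meas).1 h

lemma cube_prod_integral (g : Fin n → ℝ → ℝ) :
    ∫ lam in Set.univ.pi fun _ : Fin n => Ioo (0:ℝ) 1, ∏ i, g i (lam i)
      = ∏ i, ∫ t in Ioo (0:ℝ) 1, g i t := by
  rw [← integral_indicator cube_meas, cube_indicator_prod,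
    MeasureTheory.integral_fin_nat_prod_volume_eq_prod
      (fun i => (Ioo (0:ℝ) 1).indicator (g i))]
  exact Finset.prod_congr rfl fun i _ => integral_indicator measurableSet_Ioo


lemma sign_sq {n : ℕ} (σ : Equiv.Perm (Fin n)) :
    ((Equiv.Perm.sign σ : ℤ) : ℝ) * ((Equiv.Perm.sign σ : ℤ) : ℝ) = 1 := by
  rw [← Int.cast_mul, ← Units.val_mul, Int.units_mul_self]
  norm_num

noncomputable def gstt (n : ℕ) (β : ℝ) (f : Fin n → ℝ) (σ τ : Equiv.Perm (Fin n))
    (j : Fin n) (t : ℝ) : ℝ :=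
  t ^ ((((σ⁻¹ j : Fin n) : ℕ) : ℝ) + f (τ⁻¹ j)) * (1-t) ^ β

lemma gstt_integrable {n : ℕ} {β : ℝ} (hβ : -1 < β) {f : Fin n → ℝ} (hf : ∀ i, -1 < f i)
    (σ τ : Equiv.Perm (Fin n)) (j : Fin n) :
    IntegrableOn (gstt n β f σ τ j) (Ioo (0:ℝ) 1) := by
  have h1 : (0:ℝ) ≤ (((σ⁻¹ j : Fin n) : ℕ) : ℝ) := Nat.cast_nonneg _
  exact betaIntegrable (by linarith [hf (τ⁻¹ j)]) hβ

lemma andreief_eqOn (n : ℕ) (β : ℝ) (f : Fin n → ℝ) :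
    Set.EqOn (fun lam : Fin n → ℝ =>
        (∏ k, (1 - lam k) ^ β) * (Matrix.vandermonde lam).det *
          (Matrix.of fun j k : Fin n => lam j ^ f k).det)
      (fun lam => ∑ σ : Equiv.Perm (Fin n), ∑ τ : Equiv.Perm (Fin n),
          (((Equiv.Perm.sign σ : ℤ) : ℝ) * ((Equiv.Perm.sign τ : ℤ) : ℝ)) *
            ∏ j, gstt n β f σ τ j (lam j))
      (Set.univ.pi fun _ : Fin n => Ioo (0:ℝ) 1) := by
  intro lam hlam
  simp only
  rw [Matrix.det_apply, Matrix.det_apply, mul_assoc, Finset.sum_mul_sum,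
    Finset.mul_sum]
  refine Finset.sum_congr rfl fun σ _ => ?_
  rw [Finset.mul_sum]
  refine Finset.sum_congr rfl fun τ _ => ?_
  rw [← mul_assoc]
  simp only [Units.smul_def, zsmul_eq_mul, Matrix.of_apply, Matrix.vandermonde]
  have hP : (∏ j, lam (σ j) ^ ((j : Fin n) : ℕ))
      = ∏ j, lam j ^ (((σ⁻¹ j : Fin n) : ℕ)) := by
    rw [← Equiv.prod_comp σ (fun j => lam j ^ (((σ⁻¹ j : Fin n) : ℕ)))]
    exact Finset.prod_congr rfl fun i _ => by rw [← Equiv.Perm.mul_apply, inv_mul_cancel, Equiv.Perm.one_apply]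
  have hQ : (∏ j, lam (τ j) ^ f j) = ∏ j, lam j ^ f (τ⁻¹ j) := by
    rw [← Equiv.prod_comp τ (fun j => lam j ^ f (τ⁻¹ j))]
    exact Finset.prod_congr rfl fun i _ => by rw [← Equiv.Perm.mul_apply, inv_mul_cancel, Equiv.Perm.one_apply]
  rw [hP, hQ]
  rw [show ((∏ k, (1 - lam k) ^ β) * ((Equiv.Perm.sign σ : ℤ) *
        ∏ j, lam j ^ (((σ⁻¹ j : Fin n) : ℕ))) * ((Equiv.Perm.sign τ : ℤ) *
        ∏ j, lam j ^ f (τ⁻¹ j)) : ℝ)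
      = (((Equiv.Perm.sign σ : ℤ):ℝ) * ((Equiv.Perm.sign τ : ℤ):ℝ)) *
        ((∏ j, lam j ^ (((σ⁻¹ j : Fin n) : ℕ))) * (∏ j, lam j ^ f (τ⁻¹ j)) *
          ∏ k, (1 - lam k) ^ β) by ring]
  congr 1
  rw [← Finset.prod_mul_distrib, ← Finset.prod_mul_distrib]
  refine Finset.prod_congr rfl fun j _ => ?_
  have hj : 0 < lam j := (hlam j trivial).1
  simp only [gstt]
  rw [Real.rpow_add hj, Real.rpow_natCast]

lemma andreief_integrable (n : ℕ) {β : ℝ} (hβ : -1 < β) (f : Fin n → ℝ)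
    (hf : ∀ i, -1 < f i) :
    IntegrableOn (fun lam : Fin n → ℝ =>
        (∏ k, (1 - lam k) ^ β) * (Matrix.vandermonde lam).det *
          (Matrix.of fun j k : Fin n => lam j ^ f k).det)
      (Set.univ.pi fun _ : Fin n => Ioo (0:ℝ) 1) := by
  have hbig : IntegrableOn (fun lam : Fin n → ℝ =>
      ∑ σ : Equiv.Perm (Fin n), ∑ τ : Equiv.Perm (Fin n),
        (((Equiv.Perm.sign σ : ℤ) : ℝ) * ((Equiv.Perm.sign τ : ℤ) : ℝ)) *
          ∏ j, gstt n β f σ τ j (lam j))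
      (Set.univ.pi fun _ : Fin n => Ioo (0:ℝ) 1) :=
    integrable_finset_sum _ fun σ _ => integrable_finset_sum _ fun τ _ =>
      (cube_prod_integrable _ (gstt_integrable hβ hf σ τ)).const_mul _
  exact IntegrableOn.congr_fun hbig (andreief_eqOn n β f).symm cube_meas

lemma andreief (n : ℕ) {β : ℝ} (hβ : -1 < β) (f : Fin n → ℝ) (hf : ∀ i, -1 < f i) :
    ∫ lam in Set.univ.pi fun _ : Fin n => Ioo (0:ℝ) 1,
      (∏ k, (1 - lam k) ^ β) * (Matrix.vandermonde lam).det *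
        (Matrix.of fun j k : Fin n => lam j ^ f k).det
    = (Nat.factorial n : ℝ) * (Matrix.of fun j k : Fin n =>
        ∫ t in Ioo (0:ℝ) 1, t ^ (((j:ℕ):ℝ) + f k) * (1-t) ^ β).det := by
  classical
  have hgint : ∀ σ τ : Equiv.Perm (Fin n), ∀ j, IntegrableOn (gstt n β f σ τ j) (Ioo (0:ℝ) 1) :=
    fun σ τ j => gstt_integrable hβ hf σ τ j
  rw [setIntegral_congr_fun cube_meas (andreief_eqOn n β f)]
  have int1 : ∀ σ τ : Equiv.Perm (Fin n),
      IntegrableOn (fun lam : Fin n → ℝ =>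
        (((Equiv.Perm.sign σ : ℤ) : ℝ) * ((Equiv.Perm.sign τ : ℤ) : ℝ)) *
          ∏ j, gstt n β f σ τ j (lam j)) (Set.univ.pi fun _ : Fin n => Ioo (0:ℝ) 1) :=
    fun σ τ => (cube_prod_integrable _ (hgint σ τ)).const_mul _
  rw [integral_finset_sum _ (fun σ _ => integrable_finset_sum _ (fun τ _ => int1 σ τ))]
  have stepB : ∀ σ : Equiv.Perm (Fin n),
      ∫ lam in Set.univ.pi fun _ : Fin n => Ioo (0:ℝ) 1,
        ∑ τ : Equiv.Perm (Fin n),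
          (((Equiv.Perm.sign σ : ℤ) : ℝ) * ((Equiv.Perm.sign τ : ℤ) : ℝ)) *
            ∏ j, gstt n β f σ τ j (lam j)
      = ∑ τ : Equiv.Perm (Fin n),
          (((Equiv.Perm.sign σ : ℤ) : ℝ) * ((Equiv.Perm.sign τ : ℤ) : ℝ)) *
            ∏ j, ∫ t in Ioo (0:ℝ) 1, gstt n β f σ τ j t := by
    intro σ
    rw [integral_finset_sum _ (fun τ _ => int1 σ τ)]
    refine Finset.sum_congr rfl fun τ _ => ?_
    rw [MeasureTheory.integral_const_mul, cube_prod_integral]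
  simp_rw [stepB]
  set I : ℝ → ℝ := fun c => ∫ t in Ioo (0:ℝ) 1, t ^ c * (1-t) ^ β with hI
  have hgval : ∀ σ τ : Equiv.Perm (Fin n), ∀ j,
      (∫ t in Ioo (0:ℝ) 1, gstt n β f σ τ j t) = I ((((σ⁻¹ j : Fin n) : ℕ) : ℝ) + f (τ⁻¹ j)) := by
    intro σ τ j; rfl
  have stepC : ∀ σ : Equiv.Perm (Fin n),
      (∑ τ : Equiv.Perm (Fin n),
          (((Equiv.Perm.sign σ : ℤ) : ℝ) * ((Equiv.Perm.sign τ : ℤ) : ℝ)) *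
            ∏ j, ∫ t in Ioo (0:ℝ) 1, gstt n β f σ τ j t)
      = ∑ ρ : Equiv.Perm (Fin n), ((Equiv.Perm.sign ρ : ℤ) : ℝ) *
            ∏ j : Fin n, I (((j : ℕ) : ℝ) + f (ρ j)) := by
    intro σ
    refine Fintype.sum_equiv ((Equiv.inv (Equiv.Perm (Fin n))).trans
      (Equiv.mulRight σ)) _ _ ?_
    intro τ
    simp_rw [hgval]
    have hprod : (∏ j, I ((((σ⁻¹ j : Fin n) : ℕ) : ℝ) + f (τ⁻¹ j)))
        = ∏ j : Fin n, I (((j : ℕ) : ℝ) + f ((τ⁻¹ * σ) j)) := by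
      rw [← Equiv.prod_comp σ
        (fun j => I ((((σ⁻¹ j : Fin n) : ℕ) : ℝ) + f (τ⁻¹ j)))]
      refine Finset.prod_congr rfl fun i _ => ?_
      rw [← Equiv.Perm.mul_apply, inv_mul_cancel, Equiv.Perm.one_apply]
      rfl
    rw [hprod]
    have hsign : ((Equiv.Perm.sign ((Equiv.inv (Equiv.Perm (Fin n))).trans
        (Equiv.mulRight σ) τ) : ℤ) : ℝ)
        = ((Equiv.Perm.sign τ : ℤ) : ℝ) * ((Equiv.Perm.sign σ : ℤ) : ℝ) := by
      simp [Equiv.Perm.sign_mul, Units.val_mul]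
    rw [hsign]
    simp only [Equiv.trans_apply, Equiv.inv_apply, Equiv.coe_mulRight]
    ring
  simp_rw [stepC]
  rw [Finset.sum_const, Finset.card_univ, Fintype.card_perm, Fintype.card_fin,
    nsmul_eq_mul]
  congr 1
  rw [← Matrix.det_transpose, Matrix.det_apply]
  refine (Finset.sum_congr rfl fun ρ _ => ?_).symm
  simp only [Units.smul_def, zsmul_eq_mul, Matrix.transpose_apply, Matrix.of_apply]
  rfl

lemma gamma_ratio (x : ℝ) (hx : 0 < x) (m : ℕ) :
    Real.Gamma (x + m) = Real.Gamma x * ∏ i ∈ Finset.range m, (x + i) := by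
  induction m with
  | zero => simp
  | succ m ih =>
      have hxm : x + (m:ℝ) ≠ 0 := by positivity
      have h : (x + ((m:ℕ)+1 : ℕ) : ℝ) = (x + m) + 1 := by push_cast; ring
      rw [h, Real.Gamma_add_one hxm, ih, Finset.prod_range_succ]
      ring

lemma poly_det {n : ℕ} (p : Fin n → Polynomial ℝ) (hdeg : ∀ j, (p j).natDegree < n)
    (x : Fin n → ℝ) :
    (Matrix.of fun j k : Fin n => (p j).eval (x k)).det
      = (Matrix.of fun j k : Fin n => (p j).coeff k).det * (Matrix.vandermonde x).det := by
  have h : (Matrix.of fun j k : Fin n => (p j).eval (x k))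
      = (Matrix.of fun j k : Fin n => (p j).coeff k) * (Matrix.vandermonde x)ᵀ := by
    ext j k
    rw [Matrix.mul_apply]
    simp only [Matrix.of_apply, Matrix.transpose_apply, Matrix.vandermonde]
    rw [Polynomial.eval_eq_sum_range' (hdeg j), ← Fin.sum_univ_eq_sum_range]
  rw [h, Matrix.det_mul, Matrix.det_transpose]

noncomputable def pjay (n : ℕ) (β : ℝ) (j : Fin n) : Polynomial ℝ :=
  (∏ i ∈ Finset.range (j:ℕ), (Polynomial.X + Polynomial.C ((i:ℝ)+1))) *
  (∏ i ∈ Finset.range (n-1-(j:ℕ)), (Polynomial.X + Polynomial.C (β + (j:ℕ) + 2 + i)))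

lemma pjay_natDegree {n : ℕ} (β : ℝ) (j : Fin n) : (pjay n β j).natDegree = n - 1 := by
  have h1 : (∏ i ∈ Finset.range (j:ℕ), (Polynomial.X + Polynomial.C ((i:ℝ)+1))).Monic :=
    Polynomial.monic_prod_of_monic _ _ fun i _ => Polynomial.monic_X_add_C _
  have h2 : (∏ i ∈ Finset.range (n-1-(j:ℕ)),
      (Polynomial.X + Polynomial.C (β + (j:ℕ) + 2 + i))).Monic :=
    Polynomial.monic_prod_of_monic _ _ fun i _ => Polynomial.monic_X_add_C _
  rw [pjay, h1.natDegree_mul h2]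
  rw [Polynomial.natDegree_prod _ _ fun i _ => (Polynomial.monic_X_add_C _).ne_zero,
    Polynomial.natDegree_prod _ _ fun i _ => (Polynomial.monic_X_add_C _).ne_zero]
  simp only [Polynomial.natDegree_X_add_C, Finset.sum_const, Finset.card_range, smul_eq_mul,
    mul_one]
  have := j.isLt
  omega

lemma pjay_eval {n : ℕ} (β : ℝ) (j : Fin n) (y : ℝ) :
    (pjay n β j).eval y = (∏ i ∈ Finset.range (j:ℕ), (y + i + 1)) *
      ∏ i ∈ Finset.range (n-1-(j:ℕ)), (y + (β + (j:ℕ) + 2 + i)) := by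
  simp only [pjay, Polynomial.eval_mul, Polynomial.eval_prod, Polynomial.eval_add,
    Polynomial.eval_X, Polynomial.eval_C]
  congr 1
  exact Finset.prod_congr rfl fun i _ => by ring

lemma image_Iio_val {n : ℕ} (j : Fin n) :
    (Finset.Iio j).image Fin.val = Finset.range (j:ℕ) := by
  ext a
  simp only [Finset.mem_image, Finset.mem_range, Finset.mem_Iio]
  constructor
  · rintro ⟨i, hi, rfl⟩; exact hi
  · intro ha; exact ⟨⟨a, ha.trans j.isLt⟩, by simpa [Fin.lt_def] using ha, rfl⟩

lemma detC_eval {n : ℕ} {β : ℝ} (hβ : -1 < β) :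
    (Matrix.of fun j k : Fin n => (pjay n β j).coeff k).det
      = ∏ j : Fin n, ∏ i ∈ Finset.range (n-1-(j:ℕ)), (β + 1 + i) := by
  classical
  set q : Fin n → ℝ := fun k => -((k:ℕ):ℝ) - 1 with hq
  have hinj : Function.Injective q := by
    intro a b hab
    have : ((a:ℕ):ℝ) = ((b:ℕ):ℝ) := by
      simp only [hq] at hab; linarith
    exact Fin.val_injective (Nat.cast_injective this)
  have hVne : (Matrix.vandermonde q).det ≠ 0 :=
    Matrix.det_vandermonde_ne_zero_iff.2 hinj
  have hmain := poly_det (pjay n β) (fun j => by have := j.pos; rw [pjay_natDegree]; omega) q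
  -- the evaluated matrix is upper triangular
  have htri : ((Matrix.of fun j k : Fin n => (pjay n β j).eval (q k)).BlockTriangular id) := by
    intro r c hrc
    simp only [Matrix.of_apply, pjay_eval]
    have hzero : (∏ i ∈ Finset.range (r:ℕ), (q c + i + 1)) = 0 := by
      refine Finset.prod_eq_zero (Finset.mem_range.2 (show (c:ℕ) < (r:ℕ) from hrc)) ?_
      simp only [hq]
      ring
    rw [hzero, zero_mul]
  have hdet1 : (Matrix.of fun j k : Fin n => (pjay n β j).eval (q k)).det
      = (Matrix.vandermonde q).det *
        ∏ j : Fin n, ∏ i ∈ Finset.range (n-1-(j:ℕ)), (β + 1 + i) := by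
    rw [Matrix.det_of_upperTriangular htri]
    have hdiag : ∀ j : Fin n, (pjay n β j).eval (q j)
        = (∏ i ∈ Finset.range (j:ℕ), (((i:ℕ):ℝ) - ((j:ℕ):ℝ))) *
          ∏ i ∈ Finset.range (n-1-(j:ℕ)), (β + 1 + i) := by
      intro j
      rw [pjay_eval]
      congr 1
      · exact Finset.prod_congr rfl fun i _ => by simp [hq]; ring
      · exact Finset.prod_congr rfl fun i _ => by simp [hq]; ring
    calc ∏ j : Fin n, (Matrix.of fun j k : Fin n => (pjay n β j).eval (q k)) j j
        = ∏ j : Fin n, ((∏ i ∈ Finset.range (j:ℕ), (((i:ℕ):ℝ) - ((j:ℕ):ℝ))) *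
            ∏ i ∈ Finset.range (n-1-(j:ℕ)), (β + 1 + i)) :=
          Finset.prod_congr rfl fun j _ => hdiag j
      _ = (∏ j : Fin n, ∏ i ∈ Finset.range (j:ℕ), (((i:ℕ):ℝ) - ((j:ℕ):ℝ))) *
            ∏ j : Fin n, ∏ i ∈ Finset.range (n-1-(j:ℕ)), (β + 1 + i) :=
          Finset.prod_mul_distrib
      _ = (Matrix.vandermonde q).det *
            ∏ j : Fin n, ∏ i ∈ Finset.range (n-1-(j:ℕ)), (β + 1 + i) := by
          congr 1
          rw [Matrix.det_vandermonde]
          rw [Finset.prod_comm' (t' := Finset.univ) (s' := fun k => Finset.Iio k)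
            (by intro x y; simp [Finset.mem_Ioi, Finset.mem_Iio])]
          refine (Finset.prod_congr rfl fun j _ => ?_).symm
          rw [← image_Iio_val j, Finset.prod_image
            (by intro a _ b _ h; exact Fin.val_injective h)]
          refine Finset.prod_congr rfl fun i _ => ?_
          simp [hq]
          ring
  rw [hdet1] at hmain
  refine mul_right_cancel₀ hVne ?_
  rw [← hmain]
  ring

lemma detB (n : ℕ) {β : ℝ} (hβ : -1 < β) (α : Fin n → ℝ) (hα : ∀ l, -1 < α l) :
    (Matrix.of fun j k : Fin n =>
        ∫ t in Set.Ioo (0:ℝ) 1, t ^ (((j:ℕ):ℝ) + α k) * (1-t) ^ β).det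
    = (∏ l, Real.Gamma (α l + 1) * Real.Gamma (β + n - ((l:ℕ):ℝ)) /
        Real.Gamma (α l + β + n + 1)) * (Matrix.vandermonde α).det := by
  classical
  set colf : Fin n → ℝ := fun k =>
    Real.Gamma (α k + 1) * Real.Gamma (β+1) / Real.Gamma (α k + β + n + 1) with hcolf
  have hcastsub : ∀ j : Fin n, (((n - 1 - (j:ℕ)):ℕ):ℝ) = (n:ℝ) - 1 - ((j:ℕ):ℝ) := by
    intro j
    have h1 : (j:ℕ) < n := j.isLt
    have hj : (j:ℕ) ≤ n - 1 := by omega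
    rw [Nat.cast_sub hj, Nat.cast_sub (by omega : 1 ≤ n)]
    norm_num
  have hentry : ∀ j k : Fin n,
      (∫ t in Set.Ioo (0:ℝ) 1, t ^ (((j:ℕ):ℝ) + α k) * (1-t) ^ β)
        = colf k * (pjay n β j).eval (α k) := by
    intro j k
    have hjnn : (0:ℝ) ≤ ((j:ℕ):ℝ) := Nat.cast_nonneg _
    have ha : (-1:ℝ) < ((j:ℕ):ℝ) + α k := by linarith [hα k]
    rw [betaValue ha hβ, pjay_eval]
    have hG1 : Real.Gamma (((j:ℕ):ℝ) + α k + 1)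
        = Real.Gamma (α k + 1) * ∏ i ∈ Finset.range (j:ℕ), (α k + i + 1) := by
      have h := gamma_ratio (α k + 1) (by linarith [hα k]) (j:ℕ)
      rw [show (α k + 1 + ((j:ℕ):ℝ)) = ((j:ℕ):ℝ) + α k + 1 by ring] at h
      rw [h]
      exact congrArg _ (Finset.prod_congr rfl fun i _ => by ring)
    have hG2 : Real.Gamma (α k + β + (n:ℝ) + 1)
        = Real.Gamma (((j:ℕ):ℝ) + α k + β + 2) *
          ∏ i ∈ Finset.range (n-1-(j:ℕ)), (α k + (β + ((j:ℕ):ℝ) + 2 + i)) := by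
      have hx : (0:ℝ) < α k + β + ((j:ℕ):ℝ) + 2 := by linarith [hα k]
      have h := gamma_ratio (α k + β + ((j:ℕ):ℝ) + 2) hx (n - 1 - (j:ℕ))
      rw [hcastsub j,
        show α k + β + ((j:ℕ):ℝ) + 2 + ((n:ℝ) - 1 - ((j:ℕ):ℝ)) = α k + β + (n:ℝ) + 1
          by ring] at h
      rw [h, show (((j:ℕ):ℝ) + α k + β + 2) = α k + β + ((j:ℕ):ℝ) + 2 by ring]
      exact congrArg _ (Finset.prod_congr rfl fun i _ => by ring)
    rw [show ((j:ℕ):ℝ) + α k + β + 2 = (((j:ℕ):ℝ) + α k) + β + 2 by ring] at hG2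
    rw [show (((j:ℕ):ℝ) + α k + 1) = (((j:ℕ):ℝ) + α k) + 1 by ring] at hG1
    rw [hG1, hcolf]
    simp only
    rw [hG2]
    have hD1 : Real.Gamma ((((j:ℕ):ℝ) + α k) + β + 2) ≠ 0 :=
      ne_of_gt (Real.Gamma_pos_of_pos (by linarith [hα k]))
    have hD2 : (0:ℝ) < ∏ i ∈ Finset.range (n-1-(j:ℕ)), (α k + (β + ((j:ℕ):ℝ) + 2 + i)) :=
      Finset.prod_pos fun i _ => by
        have : (0:ℝ) ≤ (i:ℝ) := Nat.cast_nonneg _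
        linarith [hα k]
    field_simp
  have hmatrix : (Matrix.of fun j k : Fin n =>
      ∫ t in Set.Ioo (0:ℝ) 1, t ^ (((j:ℕ):ℝ) + α k) * (1-t) ^ β)
      = Matrix.of (fun j k : Fin n =>
          colf k * (Matrix.of fun j' k' : Fin n => (pjay n β j').eval (α k')) j k) := by
    ext j k
    simpa using hentry j k
  rw [hmatrix, Matrix.det_mul_row,
    poly_det (pjay n β) (fun j => by have := j.pos; rw [pjay_natDegree]; omega) α,
    detC_eval hβ]
  have hfinal : (∏ k, colf k) * (∏ j : Fin n, ∏ i ∈ Finset.range (n-1-(j:ℕ)), (β + 1 + i))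
      = ∏ l, Real.Gamma (α l + 1) * Real.Gamma (β + n - ((l:ℕ):ℝ)) /
          Real.Gamma (α l + β + n + 1) := by
    rw [← Finset.prod_mul_distrib]
    refine Finset.prod_congr rfl fun l _ => ?_
    have hGl : Real.Gamma (β + n - ((l:ℕ):ℝ))
        = Real.Gamma (β+1) * ∏ i ∈ Finset.range (n-1-(l:ℕ)), (β + 1 + i) := by
      have h := gamma_ratio (β + 1) (by linarith) (n - 1 - (l:ℕ))
      rw [hcastsub l, show β + 1 + ((n:ℝ) - 1 - ((l:ℕ):ℝ)) = β + (n:ℝ) - ((l:ℕ):ℝ) by ring] at h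
      rw [h]
    rw [hcolf]
    simp only
    rw [hGl]
    have hD : Real.Gamma (α l + β + n + 1) ≠ 0 :=
      ne_of_gt (Real.Gamma_pos_of_pos (by
        have h1n : (1:ℝ) ≤ (n:ℝ) := by exact_mod_cast l.pos
        linarith [hα l]))
    field_simp
  rw [← mul_assoc, hfinal]


def chamber (n : ℕ) (σ : Equiv.Perm (Fin n)) : Set (Fin n → ℝ) :=
  {lam | (∀ i j : Fin n, i < j → lam (σ j) < lam (σ i)) ∧ ∀ i, 0 < lam i ∧ lam i < 1}

lemma chamber_measurable {n : ℕ} (σ : Equiv.Perm (Fin n)) : MeasurableSet (chamber n σ) := by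
  simp only [chamber, Set.setOf_and, Set.setOf_forall]
  refine MeasurableSet.inter ?_ ?_
  · exact MeasurableSet.iInter fun i => MeasurableSet.iInter fun j => MeasurableSet.iInter
      fun _ => measurableSet_lt (measurable_pi_apply _) (measurable_pi_apply _)
  · exact MeasurableSet.iInter fun i =>
      (measurableSet_lt measurable_const (measurable_pi_apply _)).inter
      (measurableSet_lt (measurable_pi_apply _) measurable_const)

lemma chamber_subset {n : ℕ} (σ : Equiv.Perm (Fin n)) :
    chamber n σ ⊆ Set.univ.pi fun _ : Fin n => Ioo (0:ℝ) 1 := by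
  intro lam h i _
  exact ⟨(h.2 i).1, (h.2 i).2⟩

lemma chamber_disjoint {n : ℕ} : Pairwise (Function.onFun Disjoint (chamber n)) := by
  intro σ τ hst
  rw [Function.onFun, Set.disjoint_left]
  intro lam hσ hτ
  apply hst
  have h1 : StrictAnti (fun i => lam (σ i)) := fun a b h => hσ.1 a b h
  have h2 : StrictAnti (fun i => lam (τ i)) := fun a b h => hτ.1 a b h
  have hinj : Function.Injective lam := by
    intro a b hab
    have h := h1.injective (show (fun i => lam (σ i)) (σ.symm a)
      = (fun i => lam (σ i)) (σ.symm b) by simpa using hab)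
    have := congrArg σ h
    simpa [Equiv.apply_symm_apply] using this
  have hrange : Set.range (fun i => lam (σ i)) = Set.range (fun i => lam (τ i)) := by
    rw [show (fun i => lam (σ i)) = lam ∘ ⇑σ from rfl,
      show (fun i => lam (τ i)) = lam ∘ ⇑τ from rfl, Set.range_comp, Set.range_comp,
      Equiv.range_eq_univ, Equiv.range_eq_univ]
  have heq : (fun i => lam (σ i)) = fun i => lam (τ i) := (StrictAnti.range_inj h1 h2).1 hrange
  exact Equiv.ext fun i => hinj (congrFun heq i)

lemma chamber_cover {n : ℕ} :
    volume ((Set.univ.pi fun _ : Fin n => Ioo (0:ℝ) 1) \ ⋃ σ, chamber n σ) = 0 := by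
  have hsub : (Set.univ.pi fun _ : Fin n => Ioo (0:ℝ) 1) \ ⋃ σ, chamber n σ
      ⊆ ⋃ p : Fin n × Fin n, {lam : Fin n → ℝ | p.1 ≠ p.2 ∧ lam p.1 = lam p.2} := by
    intro lam hlam
    by_contra hc
    simp only [Set.mem_iUnion, Set.mem_setOf_eq, not_exists, not_and] at hc
    have hinj : Function.Injective lam := by
      intro a b hab
      by_contra hne
      exact hc (a, b) hne hab
    obtain ⟨hQ, hnot⟩ := hlam
    refine hnot ?_
    simp only [Set.mem_iUnion]
    refine ⟨Tuple.sort lam * Fin.revPerm, fun i j hij => ?_, fun i => ⟨(hQ i trivial).1, (hQ i trivial).2⟩⟩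
    have hmono : StrictMono (lam ∘ Tuple.sort lam) :=
      (Tuple.monotone_sort lam).strictMono_of_injective
        (hinj.comp (Tuple.sort lam).injective)
    have hrev : Fin.rev j < Fin.rev i := by rwa [Fin.rev_lt_rev]
    simpa [Equiv.Perm.mul_apply, Fin.revPerm] using hmono hrev
  refine measure_mono_null hsub (measure_iUnion_null fun p => ?_)
  by_cases hp : p.1 = p.2
  · have : {lam : Fin n → ℝ | p.1 ≠ p.2 ∧ lam p.1 = lam p.2} = ∅ := by
      ext lam; simp [hp]
    simp [this]
  · set L : (Fin n → ℝ) →ₗ[ℝ] ℝ := (LinearMap.proj (R := ℝ) (φ := fun _ : Fin n => ℝ) p.1)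
      - (LinearMap.proj (R := ℝ) (φ := fun _ : Fin n => ℝ) p.2) with hL
    have hset : {lam : Fin n → ℝ | p.1 ≠ p.2 ∧ lam p.1 = lam p.2}
        = ↑(LinearMap.ker L) := by
      ext lam
      simp only [Set.mem_setOf_eq, SetLike.mem_coe, LinearMap.mem_ker, hL, LinearMap.sub_apply,
        LinearMap.proj_apply, sub_eq_zero, ne_eq, hp, not_false_eq_true, true_and]
    rw [hset]
    refine Measure.addHaar_submodule _ _ ?_
    intro h
    have hmem : Pi.single p.1 (1:ℝ) ∈ LinearMap.ker L := by rw [h]; trivial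
    rw [LinearMap.mem_ker] at hmem
    simp [hL, Pi.single_eq_of_ne (Ne.symm hp)] at hmem

lemma chamber_integral_eq {n : ℕ} (G : (Fin n → ℝ) → ℝ)
    (hG : ∀ (σ : Equiv.Perm (Fin n)) (x : Fin n → ℝ), G (fun i => x (σ i)) = G x)
    (σ : Equiv.Perm (Fin n)) :
    ∫ x in chamber n σ, G x = ∫ x in chamber n 1, G x := by
  set T := MeasurableEquiv.piCongrLeft (fun _ : Fin n => ℝ) σ with hT
  have hTP := MeasureTheory.volume_measurePreserving_piCongrLeft (fun _ : Fin n => ℝ) σ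
  have hTx : ∀ x : Fin n → ℝ, T x = fun b => x (σ.symm b) := by
    intro x
    funext b
    have h := Equiv.piCongrLeft_apply_apply (fun _ : Fin n => ℝ) σ x (σ.symm b)
    rw [hT]
    rw [MeasurableEquiv.coe_piCongrLeft]
    rw [show b = σ (σ.symm b) by rw [Equiv.apply_symm_apply]]
    rw [h, Equiv.symm_apply_apply]
  have hpre : T ⁻¹' chamber n σ = chamber n 1 := by
    ext x
    simp only [Set.mem_preimage, chamber, Set.mem_setOf_eq, hTx x, Equiv.symm_apply_apply,
      Equiv.Perm.coe_one, id_eq]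
    constructor
    · rintro ⟨ha, hb⟩
      exact ⟨ha, fun i => by simpa using hb (σ i)⟩
    · rintro ⟨ha, hb⟩
      exact ⟨ha, fun i => hb (σ.symm i)⟩
  have hfun : (fun x => G (T x)) = G := by
    funext x
    rw [hTx x]
    exact hG σ.symm x
  calc ∫ x in chamber n σ, G x
      = ∫ x in T ⁻¹' chamber n σ, G (T x) :=
        (hTP.setIntegral_preimage_emb T.measurableEmbedding G _).symm
    _ = ∫ x in chamber n 1, G x := by rw [hpre, hfun]


lemma delta_vandermonde {n : ℕ} (x : Fin n → ℝ) :
    (∏ j, ∏ k ∈ Finset.Ioi j, (x j - x k))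
      = (∏ j : Fin n, ∏ k ∈ Finset.Ioi j, (-1:ℝ)) * (Matrix.vandermonde x).det := by
  rw [Matrix.det_vandermonde, ← Finset.prod_mul_distrib]
  refine Finset.prod_congr rfl fun j _ => ?_
  rw [← Finset.prod_mul_distrib]
  exact Finset.prod_congr rfl fun k _ => by ring


noncomputable def Gfun (n : ℕ) (β : ℝ) (α : Fin n → ℝ) : (Fin n → ℝ) → ℝ :=
  fun lam => (∏ j : Fin n, ∏ k ∈ Finset.Ioi j, (-1:ℝ)) *
    ((∏ k, (1 - lam k) ^ β) * (Matrix.vandermonde lam).det *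
      (Matrix.of fun j k : Fin n => lam j ^ α k).det)

lemma Gfun_eq (n : ℕ) (β : ℝ) (α : Fin n → ℝ) (lam : Fin n → ℝ) :
    (∏ k, (1 - lam k) ^ β) * (∏ j, ∏ k ∈ Finset.Ioi j, (lam j - lam k)) *
      (Matrix.of fun j k : Fin n => lam j ^ α k).det = Gfun n β α lam := by
  rw [Gfun, delta_vandermonde lam]
  ring

lemma Gfun_inv (n : ℕ) (β : ℝ) (α : Fin n → ℝ) (σ : Equiv.Perm (Fin n))
    (x : Fin n → ℝ) : Gfun n β α (fun i => x (σ i)) = Gfun n β α x := by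
  simp only [Gfun]
  have h1 : (∏ k, (1 - x (σ k)) ^ β) = ∏ k, (1 - x k) ^ β :=
    Equiv.prod_comp σ (fun k => (1 - x k) ^ β)
  have h2 : (Matrix.vandermonde fun i => x (σ i)).det
      = ((Equiv.Perm.sign σ : ℤ) : ℝ) * (Matrix.vandermonde x).det := by
    have h := Matrix.det_permute σ (Matrix.vandermonde x)
    rw [show ((Matrix.vandermonde x).submatrix (⇑σ) id)
      = Matrix.vandermonde fun i => x (σ i) from rfl] at h
    exact h
  have h3 : (Matrix.of fun j k : Fin n => x (σ j) ^ α k).det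
      = ((Equiv.Perm.sign σ : ℤ) : ℝ) * (Matrix.of fun j k : Fin n => x j ^ α k).det := by
    have h := Matrix.det_permute σ (Matrix.of fun j k : Fin n => x j ^ α k)
    rw [show ((Matrix.of fun j k : Fin n => x j ^ α k).submatrix (⇑σ) id)
      = Matrix.of fun j k : Fin n => x (σ j) ^ α k from rfl] at h
    exact h
  rw [h1, h2, h3]
  linear_combination ((∏ j : Fin n, ∏ k ∈ Finset.Ioi j, (-1:ℝ)) *
    ((∏ k, (1 - x k) ^ β) * (Matrix.vandermonde x).det *
      (Matrix.of fun j k : Fin n => x j ^ α k).det)) * sign_sq σ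

lemma Gfun_integrable (n : ℕ) {β : ℝ} (hβ : -1 < β) (α : Fin n → ℝ)
    (hα : ∀ l, -1 < α l) :
    IntegrableOn (Gfun n β α) (Set.univ.pi fun _ : Fin n => Ioo (0:ℝ) 1) :=
  ((andreief_integrable n hβ α hα).const_mul _ : _)

/-- normalization identity of the Jacobi upper-triangular ensemble. -/
theorem stmt_3 (n : ℕ) (hn : 1 ≤ n) (β : ℝ) (hβ : -1 < β) (α : Fin n → ℝ)
    (hα : ∀ l, -1 < α l) :
    ∫ lam in {lam : Fin n → ℝ |
        (∀ i j : Fin n, i < j → lam j < lam i) ∧ ∀ i, 0 < lam i ∧ lam i < 1},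
      (∏ k, (1 - lam k) ^ β) * (∏ j, ∏ k ∈ Finset.Ioi j, (lam j - lam k)) *
        (Matrix.of fun j k : Fin n => lam j ^ α k).det
    = (∏ j, ∏ k ∈ Finset.Ioi j, (α j - α k)) *
        ∏ l : Fin n,
          Real.Gamma (α l + 1) * Real.Gamma (β + n - (l : ℝ)) /
            Real.Gamma (α l + β + n + 1) := by
  classical
  have hregion : {lam : Fin n → ℝ |
      (∀ i j : Fin n, i < j → lam j < lam i) ∧ ∀ i, 0 < lam i ∧ lam i < 1}
      = chamber n 1 := by
    ext lam
    simp [chamber]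
  rw [hregion]
  rw [setIntegral_congr_fun (chamber_measurable 1) (fun lam _ => Gfun_eq n β α lam)]
  -- decomposition of the cube integral into chambers
  have hGint := Gfun_integrable n hβ α hα
  have hcover : (Set.univ.pi fun _ : Fin n => Ioo (0:ℝ) 1)
      =ᵐ[volume] ⋃ σ : Equiv.Perm (Fin n), chamber n σ := by
    rw [MeasureTheory.ae_eq_set]
    constructor
    · exact chamber_cover
    · have h : (⋃ σ : Equiv.Perm (Fin n), chamber n σ) \
          (Set.univ.pi fun _ : Fin n => Ioo (0:ℝ) 1) = ∅ :=
        Set.diff_eq_empty.2 (Set.iUnion_subset chamber_subset)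
      rw [h]
      exact measure_empty
  have hsum : ∫ x in Set.univ.pi fun _ : Fin n => Ioo (0:ℝ) 1, Gfun n β α x
      = ∑ σ : Equiv.Perm (Fin n), ∫ x in chamber n σ, Gfun n β α x := by
    rw [setIntegral_congr_set hcover]
    exact integral_iUnion_fintype chamber_measurable chamber_disjoint
      (fun σ => hGint.mono_set (chamber_subset σ))
  have hκ : ∀ σ : Equiv.Perm (Fin n),
      ∫ x in chamber n σ, Gfun n β α x = ∫ x in chamber n 1, Gfun n β α x :=
    chamber_integral_eq (Gfun n β α) (Gfun_inv n β α)
  have hQG : ∫ x in Set.univ.pi fun _ : Fin n => Ioo (0:ℝ) 1, Gfun n β α x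
      = (Nat.factorial n : ℝ) * ∫ x in chamber n 1, Gfun n β α x := by
    rw [hsum]
    simp_rw [hκ]
    rw [Finset.sum_const, Finset.card_univ, Fintype.card_perm, Fintype.card_fin,
      nsmul_eq_mul]
  -- value of the cube integral
  have hval : ∫ x in Set.univ.pi fun _ : Fin n => Ioo (0:ℝ) 1, Gfun n β α x
      = (∏ j : Fin n, ∏ k ∈ Finset.Ioi j, (-1:ℝ)) * ((Nat.factorial n : ℝ) *
          ((∏ l, Real.Gamma (α l + 1) * Real.Gamma (β + n - ((l:ℕ):ℝ)) /
            Real.Gamma (α l + β + n + 1)) * (Matrix.vandermonde α).det)) := by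
    have hshow : ∫ x in Set.univ.pi fun _ : Fin n => Ioo (0:ℝ) 1, Gfun n β α x
        = ∫ x in Set.univ.pi fun _ : Fin n => Ioo (0:ℝ) 1,
            (∏ j : Fin n, ∏ k ∈ Finset.Ioi j, (-1:ℝ)) *
              ((∏ k, (1 - x k) ^ β) * (Matrix.vandermonde x).det *
                (Matrix.of fun j k : Fin n => x j ^ α k).det) := rfl
    rw [hshow, MeasureTheory.integral_const_mul, andreief n hβ α hα,
      detB n hβ α hα]
  rw [delta_vandermonde α]
  have hfact : (Nat.factorial n : ℝ) ≠ 0 :=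
    Nat.cast_ne_zero.2 (Nat.factorial_ne_zero n)
  refine mul_left_cancel₀ hfact ?_
  rw [← hQG, hval]
  ring
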